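/- Consider the urn process on a finite weighted set R with positive weights w: balls are drawn one at a time without replacement, each time with probability proportional to weight. Let I be an order ideal in 2^R (a family of subsets closed under taking subsets) with ∅ ∈ I and R ∉ I. Then ∑_{X ∈ I} ∑_{i : X∪{i} ∉ I} w(i)·Pr_R(X)/w(∁X) = 1, where Pr_R(X) is the probability that the set of balls drawn at some point equals X, and w(∁X) = ∑_{i ∉ X} w(i). -/

import Mathlib

open Finset

variable {ι : Type*} [DecidableEq ι]

/-- The probability that the urn process draws the balls in the order given by
the list `l`: at each step, each remaining ball is drawn with probability
proportional to its weight. -/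
noncomputable def listProb (w : ι → ℝ) : List ι → ℝ
  | [] => 1
  | i :: l => w i / ((i :: l).map w).sum * listProb w l

/-- `urnPr w R X` is the probability that at some point of the urn process on
the weighted set `(R, w)` the set of drawn balls is exactly `X`. -/
noncomputable def urnPr (w : ι → ℝ) (R X : Finset ι) : ℝ :=
  ∑ l ∈ R.toList.permutations.toFinset,
    if (l.take X.card).toFinset = X then listProb w l else 0

/-- `exitProb w R I i` is the probability that ball `i` belongs to
`exit_R(I)`, i.e. that `i` is drawn at a moment when the set of already drawn
balls belongs to the ideal `I`. -/
noncomputable def exitProb (w : ι → ℝ) (R : Finset ι) (I : Finset (Finset ι)) (i : ι) : ℝ :=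
  ∑ l ∈ R.toList.permutations.toFinset,
    if (l.take (l.idxOf i)).toFinset ∈ I then listProb w l else 0

set_option linter.unusedSectionVars false

/-- helper: prefix factor -/
noncomputable def prefF (w : ι → ℝ) (c : ℝ) : List ι → ℝ
  | [] => 1
  | i :: p => w i / (((i :: p).map w).sum + c) * prefF w c p

lemma listProb_append (w : ι → ℝ) (p m : List ι) :
    listProb w (p ++ m) = prefF w ((m.map w).sum) p * listProb w m := by
  induction p with
  | nil => simp [prefF]
  | cons i p ih =>
      simp only [List.cons_append, List.append_eq, listProb, prefF, ih]
      rw [show ((i :: (p ++ m)).map w).sum = ((i :: p).map w).sum + (m.map w).sum by simp [add_assoc]]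
      ring

lemma mem_permsFinset {l s : List ι} :
    l ∈ s.permutations.toFinset ↔ l.Perm s := by
  simp [List.mem_permutations]

lemma perm_toList_iff {l : List ι} {s : Finset ι} :
    l.Perm s.toList ↔ l.Nodup ∧ l.toFinset = s := by
  constructor
  · intro h
    refine ⟨h.nodup_iff.2 s.nodup_toList, ?_⟩
    rw [List.toFinset_eq_iff_perm_dedup.2 h.dedup, Finset.toList_toFinset]
  · rintro ⟨h1, h2⟩
    exact List.perm_of_nodup_nodup_toFinset_eq h1 s.nodup_toList
      (by rw [h2, Finset.toList_toFinset])

lemma split_toFinset (l : List ι) (hnd : l.Nodup) (t : ℕ) :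
    (l.drop t).toFinset = l.toFinset \ (l.take t).toFinset := by
  have hl : l.take t ++ l.drop t = l := List.take_append_drop t l
  have hdisj : (l.take t).Disjoint (l.drop t) := by
    have := hnd
    rw [← hl, List.nodup_append] at this
    intro a ha hb; exact this.2.2 a ha a hb rfl
  ext a
  simp only [List.mem_toFinset, Finset.mem_sdiff]
  constructor
  · intro ha
    exact ⟨by rw [← hl]; exact List.mem_append_right _ ha, fun hx => hdisj hx ha⟩
  · rintro ⟨ha, hna⟩
    rw [← hl] at ha
    rcases List.mem_append.1 ha with h | h
    · exact absurd h hna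
    · exact h


lemma perms_eq_biUnion (s : List ι) (hs : s ≠ []) :
    s.permutations.toFinset =
      s.toFinset.biUnion
        (fun i => ((s.erase i).permutations.toFinset).image (i :: ·)) := by
  ext l
  simp only [Finset.mem_biUnion, Finset.mem_image, List.mem_toFinset, List.mem_permutations]
  constructor
  · intro h
    cases l with
    | nil => exact absurd h.nil_eq.symm hs
    | cons a l' =>
        rcases List.cons_perm_iff_perm_erase.1 h with ⟨ha, hl'⟩
        exact ⟨a, ha, l', hl', rfl⟩
  · rintro ⟨i, hi, l', hl', rfl⟩
    exact List.cons_perm_iff_perm_erase.2 ⟨hi, hl'⟩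

lemma sum_listProb_aux (w : ι → ℝ) :
    ∀ (n : ℕ) (s : List ι), s.length ≤ n → s.Nodup → (∀ i ∈ s, 0 < w i) →
      ∑ l ∈ s.permutations.toFinset, listProb w l = 1 := by
  intro n
  induction n with
  | zero =>
      intro s hlen _ _
      have : s = [] := List.length_eq_zero_iff.1 (Nat.le_zero.1 hlen)
      subst this
      simp [List.permutations, listProb]
  | succ n ih =>
      intro s hlen hnd hw
      rcases eq_or_ne s [] with rfl | hs
      · simp [List.permutations, listProb]
      · have hW : (s.map w).sum = ∑ i ∈ s.toFinset, w i := by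
          rw [← Finset.sum_map_toList]
          exact (((perm_toList_iff.2 ⟨hnd, rfl⟩)).map w).sum_eq
        have hWpos : 0 < (s.map w).sum := by
          rw [hW]
          refine Finset.sum_pos (fun i hi => hw i (List.mem_toFinset.1 hi)) ?_
          simpa using hs
        rw [perms_eq_biUnion s hs, Finset.sum_biUnion]
        · have hterm : ∀ i ∈ s.toFinset,
              (∑ l ∈ ((s.erase i).permutations.toFinset).image (i :: ·), listProb w l)
                = w i / (s.map w).sum := by
            intro i hi
            rw [Finset.sum_image (by intro x _ y _ h; exact List.cons_injective h)]
            have hcard : (s.erase i).length ≤ n := by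
              have := List.length_erase_of_mem (List.mem_toFinset.1 hi)
              omega
            have : ∀ l' ∈ (s.erase i).permutations.toFinset,
                listProb w (i :: l') = w i / (s.map w).sum * listProb w l' := by
              intro l' hl'
              have hperm : (i :: l').Perm s :=
                List.cons_perm_iff_perm_erase.2 ⟨List.mem_toFinset.1 hi, mem_permsFinset.1 hl'⟩
              have : ((i :: l').map w).sum = (s.map w).sum := (hperm.map w).sum_eq
              rw [listProb, this]
            rw [Finset.sum_congr rfl this, ← Finset.mul_sum,
              ih (s.erase i) hcard (hnd.erase i) (fun j hj => hw j (List.mem_of_mem_erase hj)),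
              mul_one]
          rw [Finset.sum_congr rfl hterm, ← Finset.sum_div, ← hW, div_self (ne_of_gt hWpos)]
        · intro a ha b hb hab
          simp only [Function.onFun]
          rw [Finset.disjoint_left]
          rintro l hl hl'
          simp only [Finset.mem_image] at hl hl'
          rcases hl with ⟨x, _, rfl⟩
          rcases hl' with ⟨y, _, h⟩
          exact hab (by injection h with h1 _; exact h1.symm ▸ rfl)

lemma sum_listProb (w : ι → ℝ) (s : List ι) (hnd : s.Nodup) (hw : ∀ i ∈ s, 0 < w i) :
    ∑ l ∈ s.permutations.toFinset, listProb w l = 1 :=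
  sum_listProb_aux w s.length s le_rfl hnd hw

lemma append_perm_toList {R X : Finset ι} (hX : X ⊆ R) {p m : List ι}
    (hp : p.Perm X.toList) (hm : m.Perm (R \ X).toList) : (p ++ m).Perm R.toList := by
  rw [perm_toList_iff] at hp hm ⊢
  refine ⟨?_, ?_⟩
  · rw [List.nodup_append]
    refine ⟨hp.1, hm.1, fun a hap b ham hab => ?_⟩
    have h1 : a ∈ X := by rw [← hp.2]; exact List.mem_toFinset.2 hap
    have h2 : a ∈ R \ X := by rw [← hm.2]; exact List.mem_toFinset.2 (by rw [hab]; exact ham)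
    exact (Finset.mem_sdiff.1 h2).2 h1
  · rw [List.toFinset_append, hp.2, hm.2, Finset.union_sdiff_of_subset hX]

lemma filter_prefix_eq (R X : Finset ι) (hX : X ⊆ R) :
    (R.toList.permutations.toFinset).filter (fun l => (l.take X.card).toFinset = X) =
    ((X.toList.permutations.toFinset) ×ˢ ((R \ X).toList.permutations.toFinset)).image
      (fun pm => pm.1 ++ pm.2) := by
  ext l
  simp only [Finset.mem_filter, Finset.mem_image, Finset.mem_product, mem_permsFinset,
    Prod.exists]
  constructor
  · rintro ⟨hl, hpre⟩
    obtain ⟨hnd, htF⟩ := perm_toList_iff.1 hl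
    refine ⟨l.take X.card, l.drop X.card, ⟨?_, ?_⟩, List.take_append_drop _ l⟩
    · exact perm_toList_iff.2 ⟨(List.take_sublist _ _).nodup hnd, hpre⟩
    · refine perm_toList_iff.2 ⟨(List.drop_sublist _ _).nodup hnd, ?_⟩
      rw [split_toFinset l hnd, htF, hpre]
  · rintro ⟨p, m, ⟨hp, hm⟩, rfl⟩
    refine ⟨append_perm_toList hX hp hm, ?_⟩
    have hlen : p.length = X.card := by
      rw [hp.length_eq, Finset.length_toList]
    rw [List.take_left' hlen]
    exact (perm_toList_iff.1 hp).2

lemma filter_prefix_next_eq (R X : Finset ι) (hX : X ⊆ R) (i : ι) (hi : i ∈ R \ X) :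
    (R.toList.permutations.toFinset).filter
        (fun l => (l.take X.card).toFinset = X ∧
          (l.take (X.card + 1)).toFinset = insert i X) =
    ((X.toList.permutations.toFinset) ×ˢ (((R \ X).erase i).toList.permutations.toFinset)).image
      (fun pm => pm.1 ++ i :: pm.2) := by
  have hiR : i ∈ R := (Finset.mem_sdiff.1 hi).1
  have hiX : i ∉ X := (Finset.mem_sdiff.1 hi).2
  have hfs : R \ insert i X = (R \ X).erase i := by
    ext a
    simp only [Finset.mem_sdiff, Finset.mem_insert, Finset.mem_erase]
    tauto
  ext l
  simp only [Finset.mem_filter, Finset.mem_image, Finset.mem_product, mem_permsFinset,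
    Prod.exists]
  constructor
  · rintro ⟨hl, hpre, hpre2⟩
    obtain ⟨hnd, htF⟩ := perm_toList_iff.1 hl
    have hcard : X.card < l.length := by
      rw [hl.length_eq, Finset.length_toList]
      exact Finset.card_lt_card (Finset.ssubset_iff_of_subset hX |>.2 ⟨i, hiR, hiX⟩)
    have htake : l.take (X.card + 1) = l.take X.card ++ [l[X.card]] := by
      rw [List.take_succ, List.getElem?_eq_getElem hcard]
      rfl
    have hnotX : l[X.card] ∉ X := by
      intro hmem
      have hmem2 : l[X.card] ∈ l.take X.card := by
        rw [← List.mem_toFinset, hpre]; exact hmem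
      have hnd2 : (l.take (X.card + 1)).Nodup := (List.take_sublist _ _).nodup hnd
      rw [htake, List.nodup_append] at hnd2
      exact hnd2.2.2 _ hmem2 _ (List.mem_singleton_self _) rfl
    have hgi : l[X.card] = i := by
      have h1 : l[X.card] ∈ insert i X := by
        rw [← hpre2]
        exact List.mem_toFinset.2
          (by rw [htake]; exact List.mem_append_right _ (List.mem_singleton_self _))
      rcases Finset.mem_insert.1 h1 with h | h
      · exact h
      · exact absurd h hnotX
    have hdecomp : l = l.take X.card ++ i :: l.drop (X.card + 1) := by
      conv_lhs => rw [← List.take_append_drop (X.card + 1) l]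
      rw [htake, hgi]
      simp
    refine ⟨l.take X.card, l.drop (X.card + 1), ⟨?_, ?_⟩, hdecomp.symm⟩
    · exact perm_toList_iff.2 ⟨(List.take_sublist _ _).nodup hnd, hpre⟩
    · refine perm_toList_iff.2 ⟨(List.drop_sublist _ _).nodup hnd, ?_⟩
      rw [split_toFinset l hnd, htF, hpre2, hfs]
  · rintro ⟨p, m, ⟨hp, hm⟩, rfl⟩
    obtain ⟨hpnd, hptF⟩ := perm_toList_iff.1 hp
    obtain ⟨hmnd, hmtF⟩ := perm_toList_iff.1 hm
    have hplen : p.length = X.card := by rw [hp.length_eq, Finset.length_toList]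
    have him : (i :: m).Perm (R \ X).toList := by
      refine perm_toList_iff.2 ⟨?_, ?_⟩
      · refine List.nodup_cons.2 ⟨fun hmem => ?_, hmnd⟩
        have : i ∈ (R \ X).erase i := by rw [← hmtF]; exact List.mem_toFinset.2 hmem
        exact (Finset.mem_erase.1 this).1 rfl
      · rw [List.toFinset_cons, hmtF, Finset.insert_erase hi]
    refine ⟨append_perm_toList hX hp him, ?_, ?_⟩
    · rw [List.take_left' hplen, hptF]
    · have : p ++ i :: m = (p ++ [i]) ++ m := by simp
      rw [this, List.take_left' (by simp [hplen]), List.toFinset_append, hptF]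
      simp only [List.toFinset_cons, List.toFinset_nil, LawfulSingleton.insert_empty_eq]
      rw [Finset.union_comm, ← Finset.insert_eq]

lemma urnPr_eq (w : ι → ℝ) (R X : Finset ι) (hw : ∀ i ∈ R, 0 < w i) (hX : X ⊆ R) :
    urnPr w R X = ∑ p ∈ X.toList.permutations.toFinset, prefF w (∑ j ∈ R \ X, w j) p := by
  classical
  have hWm : ∀ m ∈ (R \ X).toList.permutations.toFinset,
      (m.map w).sum = ∑ j ∈ R \ X, w j := fun m hm => by
    rw [((mem_permsFinset.1 hm).map w).sum_eq, Finset.sum_map_toList]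
  rw [urnPr, ← Finset.sum_filter, filter_prefix_eq R X hX, Finset.sum_image ?inj]
  case inj =>
    intro x hx y hy h
    simp only [Finset.mem_coe, Finset.mem_product, mem_permsFinset] at hx hy
    have hlx : x.1.length = y.1.length := by rw [hx.1.length_eq, hy.1.length_eq]
    obtain ⟨h1, h2⟩ := List.append_inj h hlx
    exact Prod.ext h1 h2
  rw [Finset.sum_product]
  calc ∑ p ∈ X.toList.permutations.toFinset, ∑ m ∈ (R \ X).toList.permutations.toFinset,
        listProb w (p ++ m)
      = ∑ p ∈ X.toList.permutations.toFinset, ∑ m ∈ (R \ X).toList.permutations.toFinset,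
        prefF w (∑ j ∈ R \ X, w j) p * listProb w m := by
        refine Finset.sum_congr rfl fun p hp => Finset.sum_congr rfl fun m hm => ?_
        rw [listProb_append, hWm m hm]
    _ = _ := by
        refine Finset.sum_congr rfl fun p hp => ?_
        rw [← Finset.mul_sum, sum_listProb w _ (Finset.nodup_toList _)
          (fun j hj => hw j (Finset.mem_sdiff.1 (Finset.mem_toList.1 hj)).1), mul_one]

lemma exit_term_eq (w : ι → ℝ) (R X : Finset ι) (hw : ∀ i ∈ R, 0 < w i) (hX : X ⊆ R)
    (i : ι) (hi : i ∈ R \ X) :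
    ∑ l ∈ R.toList.permutations.toFinset,
        (if (l.take X.card).toFinset = X ∧ (l.take (X.card + 1)).toFinset = insert i X
         then listProb w l else 0)
      = w i * urnPr w R X / ∑ j ∈ R \ X, w j := by
  classical
  have hWm : ∀ m ∈ ((R \ X).erase i).toList.permutations.toFinset,
      w i + (m.map w).sum = ∑ j ∈ R \ X, w j := fun m hm => by
    rw [((mem_permsFinset.1 hm).map w).sum_eq, Finset.sum_map_toList]
    exact Finset.add_sum_erase _ _ hi
  rw [← Finset.sum_filter, filter_prefix_next_eq R X hX i hi, Finset.sum_image ?inj]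
  case inj =>
    intro x hx y hy h
    simp only [Finset.mem_coe, Finset.mem_product, mem_permsFinset] at hx hy
    have hlx : x.1.length = y.1.length := by rw [hx.1.length_eq, hy.1.length_eq]
    obtain ⟨h1, h2⟩ := List.append_inj h hlx
    exact Prod.ext h1 (by injection h2)
  rw [Finset.sum_product]
  have hstep : ∀ p ∈ X.toList.permutations.toFinset,
      ∀ m ∈ ((R \ X).erase i).toList.permutations.toFinset,
      listProb w (p ++ i :: m)
        = prefF w (∑ j ∈ R \ X, w j) p * (w i / (∑ j ∈ R \ X, w j)) * listProb w m := by
    intro p hp m hm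
    rw [listProb_append]
    have h1 : ((i :: m).map w).sum = ∑ j ∈ R \ X, w j := by
      rw [List.map_cons, List.sum_cons, hWm m hm]
    rw [show listProb w (i :: m) = w i / ((i :: m).map w).sum * listProb w m from rfl, h1]
    ring
  calc ∑ p ∈ X.toList.permutations.toFinset, ∑ m ∈ ((R \ X).erase i).toList.permutations.toFinset,
        listProb w (p ++ i :: m)
      = ∑ p ∈ X.toList.permutations.toFinset,
          prefF w (∑ j ∈ R \ X, w j) p * (w i / (∑ j ∈ R \ X, w j)) := by
        refine Finset.sum_congr rfl fun p hp => ?_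
        rw [Finset.sum_congr rfl (hstep p hp), ← Finset.mul_sum,
          sum_listProb w _ (Finset.nodup_toList _)
            (fun j hj => hw j
              (Finset.mem_sdiff.1 (Finset.mem_of_mem_erase (Finset.mem_toList.1 hj))).1),
          mul_one]
    _ = w i * urnPr w R X / ∑ j ∈ R \ X, w j := by
        rw [← Finset.sum_mul, ← urnPr_eq w R X hw hX]
        ring

/-- the total probability of leaving the order ideal `I` is 1. -/
theorem sum_exit_ideal_eq_one
    (w : ι → ℝ) (R : Finset ι) (hw : ∀ i ∈ R, 0 < w i)
    (I : Finset (Finset ι)) (hIsub : ∀ X ∈ I, X ⊆ R)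
    (hIdeal : ∀ X ∈ I, ∀ Y, Y ⊆ X → Y ∈ I)
    (hbot : ∅ ∈ I) (htop : R ∉ I) :
    ∑ X ∈ I, ∑ i ∈ (R \ X).filter (fun i => insert i X ∉ I),
        w i * urnPr w R X / ∑ j ∈ R \ X, w j = 1 := by
  classical
  have step1 : ∀ X ∈ I, ∀ i ∈ (R \ X).filter (fun i => insert i X ∉ I),
      w i * urnPr w R X / ∑ j ∈ R \ X, w j
        = ∑ l ∈ R.toList.permutations.toFinset,
            (if (l.take X.card).toFinset = X ∧ (l.take (X.card + 1)).toFinset = insert i X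
             then listProb w l else 0) := by
    intro X hX i hi
    exact (exit_term_eq w R X hw (hIsub X hX) i (Finset.mem_filter.1 hi).1).symm
  rw [Finset.sum_congr rfl (fun X hX => Finset.sum_congr rfl (step1 X hX))]
  rw [Finset.sum_congr rfl (fun X (hX : X ∈ I) =>
    Finset.sum_comm (s := (R \ X).filter (fun i => insert i X ∉ I))
      (t := R.toList.permutations.toFinset))]
  rw [Finset.sum_comm]
  have step3 : ∀ l ∈ R.toList.permutations.toFinset,
      (∑ X ∈ I, ∑ i ∈ (R \ X).filter (fun i => insert i X ∉ I),
          (if (l.take X.card).toFinset = X ∧ (l.take (X.card + 1)).toFinset = insert i X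
           then listProb w l else 0)) = listProb w l := by
    intro l hl
    have hlP : l.Perm R.toList := mem_permsFinset.1 hl
    obtain ⟨hnd, htF⟩ := perm_toList_iff.1 hlP
    have hlen : l.length = R.card := by rw [hlP.length_eq, Finset.length_toList]
    set P : ℕ → Prop := fun t => (l.take t).toFinset ∈ I with hP
    have hPmono : ∀ a b : ℕ, a ≤ b → P b → P a := by
      intro a b hab h
      refine hIdeal _ h _ ?_
      have hta : l.take a = (l.take b).take a := by
        rw [List.take_take, min_eq_left hab]
      rw [hta]
      exact fun x hx =>
        List.mem_toFinset.2 ((List.take_sublist _ _).subset (List.mem_toFinset.1 hx))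
    have hPn : ¬ P l.length := by
      simp only [hP, List.take_length, htF]
      exact htop
    have hex : ∃ t, ¬ P t := ⟨l.length, hPn⟩
    set t₁ := Nat.find hex with ht₁def
    have ht₁ : ¬ P t₁ := Nat.find_spec hex
    have hmin : ∀ s, P s → s < t₁ := by
      intro s hs
      by_contra hcon
      exact ht₁ (hPmono t₁ s (not_lt.1 hcon) hs)
    have hP0 : P 0 := by simpa [hP] using hbot
    have ht₁pos : 0 < t₁ := hmin 0 hP0
    set t₀ := t₁ - 1 with ht₀def
    have ht₀ : P t₀ := by
      have := Nat.find_min hex (show t₀ < t₁ by omega)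
      exact not_not.1 this
    have ht₀1 : t₀ + 1 = t₁ := by omega
    have hnPt₁ : ¬ P (t₀ + 1) := by rw [ht₀1]; exact ht₁
    have ht₀len : t₀ < l.length := by
      by_contra hcon
      push_neg at hcon
      have : l.take t₀ = l := List.take_of_length_le hcon
      rw [hP, this, htF] at ht₀
      exact htop ht₀
    set i₀ := l[t₀] with hi₀def
    set X₀ := (l.take t₀).toFinset with hX₀def
    have hX₀card : X₀.card = t₀ := by
      rw [hX₀def, List.toFinset_card_of_nodup ((List.take_sublist _ _).nodup hnd),
        List.length_take]
      omega
    have htake : l.take (t₀ + 1) = l.take t₀ ++ [i₀] := by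
      rw [List.take_succ, List.getElem?_eq_getElem ht₀len]
      rfl
    have hins : (l.take (t₀ + 1)).toFinset = insert i₀ X₀ := by
      rw [htake, List.toFinset_append]
      simp only [List.toFinset_cons, List.toFinset_nil, LawfulSingleton.insert_empty_eq]
      rw [Finset.union_comm, ← Finset.insert_eq, hX₀def]
    have hi₀X₀ : i₀ ∉ X₀ := by
      intro hmem
      have hmem2 : i₀ ∈ l.take t₀ := by
        rw [hX₀def, List.mem_toFinset] at hmem
        exact hmem
      have hnd2 : (l.take (t₀ + 1)).Nodup := (List.take_sublist _ _).nodup hnd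
      rw [htake, List.nodup_append] at hnd2
      exact hnd2.2.2 _ hmem2 _ (List.mem_singleton_self _) rfl
    have hi₀R : i₀ ∈ R := by
      rw [← htF]
      exact List.mem_toFinset.2 (List.getElem_mem _)
    have hX₀I : X₀ ∈ I := ht₀
    have hinsNI : insert i₀ X₀ ∉ I := by
      rw [← hins]
      exact hnPt₁
    have hi₀mem : i₀ ∈ (R \ X₀).filter (fun i => insert i X₀ ∉ I) := by
      rw [Finset.mem_filter, Finset.mem_sdiff]
      exact ⟨⟨hi₀R, hi₀X₀⟩, hinsNI⟩
    have huniq : ∀ X ∈ I, ∀ i : ι, i ∉ X → insert i X ∉ I →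
        (l.take X.card).toFinset = X → (l.take (X.card + 1)).toFinset = insert i X →
        X = X₀ ∧ i = i₀ := by
      intro X hXI i hiX hinsNI' hc1 hc2
      have hPX : P X.card := by
        show (l.take X.card).toFinset ∈ I
        rw [hc1]; exact hXI
      have hnP : ¬ P (X.card + 1) := by
        intro hcon
        apply hinsNI'
        rw [← hc2]
        exact hcon
      have h1 : X.card < t₁ := hmin _ hPX
      have h2 : t₁ ≤ X.card + 1 := Nat.find_le hnP
      have ht : X.card = t₀ := by omega
      have hXX₀ : X = X₀ := by rw [← hc1, ht, hX₀def]
      refine ⟨hXX₀, ?_⟩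
      have hii : insert i X = insert i₀ X₀ := by
        rw [← hc2, ht]; exact hins
      have hmemi : i ∈ insert i₀ X₀ := hii ▸ Finset.mem_insert_self i X
      rcases Finset.mem_insert.1 hmemi with h | h
      · exact h
      · exact absurd (by rw [hXX₀]; exact h) hiX
    refine Finset.sum_eq_single_of_mem X₀ hX₀I ?_ |>.trans ?_
    · intro X hXI hne
      refine Finset.sum_eq_zero fun i hi => ?_
      rw [Finset.mem_filter, Finset.mem_sdiff] at hi
      rw [if_neg]
      rintro ⟨hc1, hc2⟩
      exact hne (huniq X hXI i hi.1.2 hi.2 hc1 hc2).1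
    · refine Finset.sum_eq_single_of_mem i₀ hi₀mem ?_ |>.trans ?_
      · intro i hi hne
        rw [Finset.mem_filter, Finset.mem_sdiff] at hi
        rw [if_neg]
        rintro ⟨hc1, hc2⟩
        exact hne (huniq X₀ hX₀I i hi.1.2 hi.2 hc1 hc2).2
      · rw [if_pos]
        constructor
        · rw [hX₀card, hX₀def]
        · rw [hX₀card]
          exact hins
  rw [Finset.sum_congr rfl step3]
  exact sum_listProb w R.toList (Finset.nodup_toList R)
    (fun i hi => hw i (Finset.mem_toList.1 hi))
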